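/- arXiv:2310.00262 — 4 statements merged into one kernel-verified Lean document; each statement's English description precedes it below -/
import Mathlib

section
/- Let P be a symmetric positive definite n×n real matrix and ρ, ε, μ > 0 scalars satisfying ε < sqrt(2ρμ/‖P‖), where ‖P‖ is the operator norm of P. Then the 2n×2n block matrix [[ρP, εP],[εP, 2μI]] is positive definite. -/
open Matrix

section aux

variable {m n : Type*} [Fintype m] [DecidableEq m] [Fintype n] [DecidableEq n]

lemma aux_posDef_smul {P : Matrix n n ℝ} (hP : P.PosDef) {c : ℝ} (hc : 0 < c) :
    (c • P).PosDef := by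
  have ht : Pᵀ = P := by simpa using hP.1.eq
  have hherm : (c • P).IsHermitian := by
    simp [Matrix.IsHermitian, ht]
  refine posDef_iff_dotProduct_mulVec.2 ⟨hherm, fun x hx => ?_⟩
  have := hP.dotProduct_mulVec_pos hx
  simp only [smul_mulVec, dotProduct_smul, smul_eq_mul]
  positivity

lemma aux_posDef_fromBlocks {A : Matrix m m ℝ} (B : Matrix m n ℝ) {D : Matrix n n ℝ}
    (hA : A.PosDef) [Invertible A] (hschur : (D - Bᴴ * A⁻¹ * B).PosDef) :
    (fromBlocks A B Bᴴ D).PosDef := by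
  refine posDef_iff_dotProduct_mulVec.2 ⟨(Matrix.IsHermitian.fromBlocks₁₁ B D hA.1).2 hschur.1, fun z hz => ?_⟩
  have key := Matrix.schur_complement_eq₁₁ (A := A) B D (z ∘ Sum.inl) (z ∘ Sum.inr) hA.1
  rw [Sum.elim_comp_inl_inr z] at key
  simp only [star_trivial] at key
  rw [dotProduct_mulVec, star_trivial, key]
  by_cases hy : z ∘ Sum.inr = 0
  · have hx : z ∘ Sum.inl ≠ 0 := by
      intro hx0
      apply hz
      funext i
      cases i with
      | inl i => exact congrFun hx0 i
      | inr i => exact congrFun hy i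
    rw [hy]
    simp only [mulVec_zero, add_zero, zero_vecMul, zero_dotProduct]
    have := hA.dotProduct_mulVec_pos hx
    rw [dotProduct_mulVec, star_trivial] at this
    linarith
  · have h1 : 0 ≤ (star (z ∘ Sum.inl + (A⁻¹ * B) *ᵥ (z ∘ Sum.inr))) ᵥ* A ⬝ᵥ
        (z ∘ Sum.inl + (A⁻¹ * B) *ᵥ (z ∘ Sum.inr)) := by
      rw [← dotProduct_mulVec]
      exact (posSemidef_iff_dotProduct_mulVec.1 hA.posSemidef).2 _
    have h2 : 0 < (star (z ∘ Sum.inr)) ᵥ* (D - Bᴴ * A⁻¹ * B) ⬝ᵥ (z ∘ Sum.inr) := by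
      rw [← dotProduct_mulVec]
      exact hschur.dotProduct_mulVec_pos hy
    rw [star_trivial] at h1 h2
    linarith

end aux

lemma aux_quad_le {n : ℕ} (P : Matrix (Fin n) (Fin n) ℝ) (x : Fin n → ℝ) :
    x ⬝ᵥ P *ᵥ x ≤ ‖toEuclideanCLM (𝕜 := ℝ) (n := Fin n) P‖ * (x ⬝ᵥ x) := by
  set T := toEuclideanCLM (𝕜 := ℝ) (n := Fin n) P with hT
  set x' : EuclideanSpace ℝ (Fin n) := (WithLp.equiv 2 _).symm x with hx'
  have h1 : x ⬝ᵥ P *ᵥ x = inner ℝ x' (T x') := by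
    rw [hT, hx', WithLp.equiv_symm_apply, Matrix.toEuclideanCLM_toLp]
    simp [PiLp.inner_apply, RCLike.inner_apply, dotProduct, PiLp.toLp_apply, mul_comm]
  have h2 : (inner ℝ x' (T x') : ℝ) ≤ ‖x'‖ * ‖T x'‖ := real_inner_le_norm _ _
  have h3 : ‖T x'‖ ≤ ‖T‖ * ‖x'‖ := T.le_opNorm x'
  have h4 : ‖x'‖ * ‖x'‖ = x ⬝ᵥ x := by
    rw [← real_inner_self_eq_norm_mul_norm, hx', WithLp.equiv_symm_apply]
    simp [PiLp.inner_apply, RCLike.inner_apply, dotProduct, PiLp.toLp_apply, EuclideanSpace.norm_sq_eq, ← sq]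
  nlinarith [norm_nonneg x', norm_nonneg (T x'), norm_nonneg T]

/-- For `P` symmetric positive definite, `ρ, ε, μ > 0` with
`ε < sqrt(2ρμ/‖P‖)` (`‖P‖` the operator norm), the block matrix
`[[ρP, εP],[εP, 2μI]]` is positive definite. -/
theorem block_lyapunov_matrix_posDef {n : ℕ} (P : Matrix (Fin n) (Fin n) ℝ)
    (hP : P.PosDef) (ρ ε μ : ℝ) (hρ : 0 < ρ) (hε : 0 < ε) (hμ : 0 < μ)
    (hcond : ε < Real.sqrt (2 * ρ * μ / ‖toEuclideanCLM (𝕜 := ℝ) (n := Fin n) P‖)) :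
    (fromBlocks (ρ • P) (ε • P) (ε • P) ((2 * μ) • (1 : Matrix (Fin n) (Fin n) ℝ))).PosDef := by
  set N := ‖toEuclideanCLM (𝕜 := ℝ) (n := Fin n) P‖ with hN
  have ht : Pᵀ = P := by simpa using hP.1.eq
  have hNpos : 0 < N := by
    rcases (norm_nonneg _ : 0 ≤ N).lt_or_eq with h | h
    · exact h
    · exfalso
      rw [show N = 0 from h.symm, div_zero, Real.sqrt_zero] at hcond
      linarith
  have hε2 : ε ^ 2 * N < 2 * ρ * μ := by
    have h := (Real.lt_sqrt hε.le).1 hcond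
    rw [lt_div_iff₀ hNpos] at h
    linarith
  set c := ε ^ 2 / ρ with hc
  have hcpos : 0 < c := by positivity
  have hcN : c * N < 2 * μ := by
    rw [hc, div_mul_eq_mul_div, div_lt_iff₀ hρ]
    nlinarith
  have hA : (ρ • P).PosDef := aux_posDef_smul hP hρ
  have hPdet : IsUnit P.det := isUnit_iff_ne_zero.2 hP.det_pos.ne'
  haveI : Invertible (ρ • P) := (ρ • P).invertibleOfIsUnitDet
    (isUnit_iff_ne_zero.2 hA.det_pos.ne')
  have hBH : (ε • P)ᴴ = ε • P := by simp [conjTranspose_smul, ht]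
  have hAinv : (ρ • P)⁻¹ = ρ⁻¹ • P⁻¹ := by
    haveI : Invertible ρ := invertibleOfNonzero hρ.ne'
    rw [Matrix.inv_smul (A := P) ρ hPdet, invOf_eq_inv]
  have hschurmat : (2 * μ) • (1 : Matrix (Fin n) (Fin n) ℝ) -
      (ε • P)ᴴ * (ρ • P)⁻¹ * (ε • P) = (2 * μ) • 1 - c • P := by
    rw [hBH, hAinv]
    have hm : (ε • P) * (ρ⁻¹ • P⁻¹) * (ε • P) = c • (P * P⁻¹ * P) := by
      simp only [Matrix.smul_mul, Matrix.mul_smul, smul_smul]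
      congr 1
      rw [hc]
      field_simp
    rw [hm, Matrix.mul_nonsing_inv P hPdet, Matrix.one_mul]
  have hschur : ((2 * μ) • (1 : Matrix (Fin n) (Fin n) ℝ) - c • P).PosDef := by
    rw [posDef_iff_dotProduct_mulVec]
    constructor
    · simp [Matrix.IsHermitian, transpose_sub, transpose_smul, ht]
    · intro x hx
      have hq : star x ⬝ᵥ (((2 * μ) • (1 : Matrix (Fin n) (Fin n) ℝ) - c • P) *ᵥ x) =
          2 * μ * (x ⬝ᵥ x) - c * (x ⬝ᵥ P *ᵥ x) := by
        simp [sub_mulVec, smul_mulVec, one_mulVec, dotProduct_sub, dotProduct_smul,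
          smul_eq_mul, star_trivial]
      rw [hq]
      have hxx : 0 < x ⬝ᵥ x := by
        have h1 := (Matrix.PosDef.one (n := Fin n) (R := ℝ)).dotProduct_mulVec_pos hx
        simpa using h1
      have hb := aux_quad_le P x
      rw [← hN] at hb
      nlinarith
  have hschur' : ((2 * μ) • (1 : Matrix (Fin n) (Fin n) ℝ) -
      (ε • P)ᴴ * (ρ • P)⁻¹ * (ε • P)).PosDef := by rw [hschurmat]; exact hschur
  have hfin := aux_posDef_fromBlocks (ε • P) hA hschur'
  rwa [hBH] at hfin
end

section
/- Let P be symmetric positive definite with ‖P‖ ≤ λ_P, and L with ‖L‖ ≤ λ_L. Let α₂, k_x > 0 and k_d > (1/2)α₂k_xλ_L² + λ_P/α₂. Then the matrix D = 2(α₂k_d I − P) − α₂²k_x L Lᵀ is positive definite. -/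
open Matrix RealInnerProductSpace

set_option maxHeartbeats 1000000 in
set_option synthInstance.maxHeartbeats 200000 in
/-- If `P` is symmetric positive definite with `‖P‖ ≤ λ_P`,
`‖L‖ ≤ λ_L` (operator norms), `α₂, k_x > 0` and
`k_d > (1/2)α₂k_xλ_L² + λ_P/α₂`, then
`D = 2(α₂k_d I − P) − α₂²k_x L Lᵀ` is positive definite. -/
theorem D_matrix_posDef {n : ℕ} (P L : Matrix (Fin n) (Fin n) ℝ)
    (hP : P.PosDef) (lamP lamL α₂ kx kd : ℝ)
    (hlamP : ‖toEuclideanCLM (𝕜 := ℝ) (n := Fin n) P‖ ≤ lamP)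
    (hlamL : ‖toEuclideanCLM (𝕜 := ℝ) (n := Fin n) L‖ ≤ lamL)
    (hα₂ : 0 < α₂) (hkx : 0 < kx)
    (hkd : kd > (1 / 2) * α₂ * kx * lamL ^ 2 + lamP / α₂) :
    ((2 : ℝ) • ((α₂ * kd) • (1 : Matrix (Fin n) (Fin n) ℝ) - P)
      - (α₂ ^ 2 * kx) • (L * Lᵀ)).PosDef := by
  have hLsym : Lᵀ = star L := rfl
  have hnormLT : ‖toEuclideanCLM (𝕜 := ℝ) (n := Fin n) Lᵀ‖ ≤ lamL := by
    rw [hLsym, map_star, ContinuousLinearMap.star_eq_adjoint,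
      LinearIsometryEquiv.norm_map]
    exact hlamL
  have hlamL0 : 0 ≤ lamL := le_trans (norm_nonneg _) hlamL
  have hPT : Pᵀ = P := by
    rw [← conjTranspose_eq_transpose_of_trivial]; exact hP.1
  rw [posDef_iff_dotProduct_mulVec]
  constructor
  · show _ᴴ = _
    simp [conjTranspose_eq_transpose_of_trivial, transpose_smul, transpose_sub,
      transpose_mul, transpose_one, hPT, Matrix.mul_assoc]
  · intro x hx
    set y : EuclideanSpace ℝ (Fin n) := (WithLp.equiv 2 _).symm x with hy
    have hy0 : y ≠ 0 := fun h => hx (by simpa [hy] using congrArg WithLp.ofLp h)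
    have hN : (0:ℝ) < ‖y‖ ^ 2 := pow_pos (norm_pos_iff.mpr hy0) 2
    have hNx : dotProduct x x = ‖y‖ ^ 2 := by
      rw [← real_inner_self_eq_norm_sq]
      rfl
    -- bound on x ⬝ P x
    have hPx : dotProduct x (P *ᵥ x) ≤ lamP * ‖y‖ ^ 2 := by
      have h1 : dotProduct x (P *ᵥ x) = ⟪y, toEuclideanCLM (𝕜 := ℝ) P y⟫ := by
        rw [EuclideanSpace.inner_eq_star_dotProduct, dotProduct_comm]; rfl
      rw [h1]
      calc ⟪y, toEuclideanCLM (𝕜 := ℝ) P y⟫ ≤ ‖y‖ * ‖toEuclideanCLM (𝕜 := ℝ) P y‖ :=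
            real_inner_le_norm _ _
        _ ≤ ‖y‖ * (‖toEuclideanCLM (𝕜 := ℝ) P‖ * ‖y‖) := by
            gcongr; exact (toEuclideanCLM (𝕜 := ℝ) P).le_opNorm y
        _ ≤ ‖y‖ * (lamP * ‖y‖) := by gcongr
        _ = lamP * ‖y‖ ^ 2 := by ring
    -- bound on x ⬝ (L Lᵀ) x
    have hLx : dotProduct x ((L * Lᵀ) *ᵥ x) ≤ lamL ^ 2 * ‖y‖ ^ 2 := by
      have h1 : dotProduct x ((L * Lᵀ) *ᵥ x) = dotProduct (Lᵀ *ᵥ x) (Lᵀ *ᵥ x) := by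
        rw [← Matrix.mulVec_mulVec, Matrix.dotProduct_mulVec, ← Matrix.mulVec_transpose]
      have h2 : dotProduct (Lᵀ *ᵥ x) (Lᵀ *ᵥ x)
          = ‖toEuclideanCLM (𝕜 := ℝ) Lᵀ y‖ ^ 2 := by
        rw [← real_inner_self_eq_norm_sq]
        rfl
      rw [h1, h2]
      have h3 : ‖toEuclideanCLM (𝕜 := ℝ) Lᵀ y‖ ≤ lamL * ‖y‖ :=
        ((toEuclideanCLM (𝕜 := ℝ) Lᵀ).le_opNorm y).trans (by gcongr)
      calc ‖toEuclideanCLM (𝕜 := ℝ) Lᵀ y‖ ^ 2 ≤ (lamL * ‖y‖) ^ 2 := by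
            gcongr
        _ = lamL ^ 2 * ‖y‖ ^ 2 := by ring
    have hform : dotProduct (star x)
        (((2 : ℝ) • ((α₂ * kd) • (1 : Matrix (Fin n) (Fin n) ℝ) - P)
          - (α₂ ^ 2 * kx) • (L * Lᵀ)) *ᵥ x)
        = 2 * (α₂ * kd) * dotProduct x x - 2 * dotProduct x (P *ᵥ x)
          - (α₂ ^ 2 * kx) * dotProduct x ((L * Lᵀ) *ᵥ x) := by
      simp [Matrix.sub_mulVec, Matrix.smul_mulVec, Matrix.one_mulVec,
        dotProduct_sub, dotProduct_smul, smul_eq_mul]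
      ring
    rw [hform, hNx]
    have key : 2 * (α₂ * kd) * ‖y‖ ^ 2 - 2 * (lamP * ‖y‖ ^ 2)
        - (α₂ ^ 2 * kx) * (lamL ^ 2 * ‖y‖ ^ 2) > 0 := by
      have h2 : α₂ * kd > α₂ * ((1 / 2) * α₂ * kx * lamL ^ 2 + lamP / α₂) :=
        (mul_lt_mul_iff_right₀ hα₂).mpr hkd
      have h3 : α₂ * (lamP / α₂) = lamP := by field_simp
      nlinarith [hN, hα₂, hkx]
    have h4 : α₂ ^ 2 * kx * (x ⬝ᵥ (L * Lᵀ) *ᵥ x) ≤ α₂ ^ 2 * kx * (lamL ^ 2 * ‖y‖ ^ 2) :=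
      mul_le_mul_of_nonneg_left hLx (by positivity)
    linarith [hPx, h4, key]
end

section
/- Suppose the symmetric matrices P, L ∈ ℝ^{n×n} and positive scalar α₁ (with α₁ = k_d), ν = α₁/k_d = 1·α₁/k_d, and error trajectories satisfying ė_x = e_y + e_d, ė_y = −k_xL e_x − k_d e_y, ė_d = −α₁e_x − νe_y, with PL + LᵀP = I (normalized Lyapunov identity on the relevant subspace). Then the derivative of W = (1/2)(e_x,e_y)ᵀ[[α₁P, νP],[νP, α₂I]](e_x,e_y) + (1/2)e_dᵀPe_d along trajectories equals −(1/2)(e_x,e_y)ᵀ M (e_x,e_y) where M = [[(α₁/k_d)k_x I, α₂k_x Lᵀ],[α₂k_x L, 2(α₂k_d I − (α₁/k_d)P)]]; in particular Ẇ contains no e_d terms. -/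
open Matrix

lemma hasDerivAt_quadform {ι : Type*} [Fintype ι] (M : Matrix ι ι ℝ)
    (u w : ℝ → ι → ℝ) (u' w' : ι → ℝ) (t : ℝ)
    (hu : ∀ i, HasDerivAt (fun s => u s i) (u' i) t)
    (hw : ∀ i, HasDerivAt (fun s => w s i) (w' i) t) :
    HasDerivAt (fun s => u s ⬝ᵥ (M *ᵥ w s))
      (u' ⬝ᵥ (M *ᵥ w t) + u t ⬝ᵥ (M *ᵥ w')) t := by
  simp only [dotProduct, mulVec]
  have h : ∀ i : ι, HasDerivAt (fun s => u s i * ∑ j, M i j * w s j)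
      (u' i * (∑ j, M i j * w t j) + u t i * (∑ j, M i j * w' j)) t :=
    fun i => (hu i).mul (HasDerivAt.fun_sum fun j _ => (hw j).const_mul (M i j))
  have := HasDerivAt.fun_sum (fun i (_ : i ∈ Finset.univ) => h i)
  simpa [Finset.sum_add_distrib] using this

/-- With `P` symmetric positive definite, `PL + LᵀP = I`,
`α₁ = k_d`, `ν = α₁/k_d`, and error trajectories satisfying
`ė_x = e_y + e_d`, `ė_y = −k_xL e_x − k_d e_y`, `ė_d = −α₁e_x − νe_y`, the derivative
of `W = (1/2)(e_x,e_y)ᵀ[[α₁P, νP],[νP, α₂I]](e_x,e_y) + (1/2)e_dᵀPe_d` along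
trajectories equals `−(1/2)(e_x,e_y)ᵀ M (e_x,e_y)` with
`M = [[(α₁/k_d)k_x I, α₂k_x Lᵀ],[α₂k_x L, 2(α₂k_d I − (α₁/k_d)P)]]`. -/
theorem lyapunov_W_derivative {n : ℕ} (P L : Matrix (Fin n) (Fin n) ℝ)
    (hP : P.PosDef) (hPL : P * L + Lᵀ * P = (1 : Matrix (Fin n) (Fin n) ℝ))
    (kx kd α₁ α₂ ν : ℝ) (hkx : 0 < kx) (hkd : 0 < kd) (hα₁ : 0 < α₁) (hα₂ : 0 < α₂)
    (hα₁kd : α₁ = kd) (hν : ν = α₁ / kd)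
    (ex ey ed : ℝ → Fin n → ℝ)
    (hex : ∀ t i, HasDerivAt (fun s => ex s i) ((ey t + ed t) i) t)
    (hey : ∀ t i, HasDerivAt (fun s => ey s i)
      ((-(kx • (L *ᵥ ex t)) - kd • ey t) i) t)
    (hed : ∀ t i, HasDerivAt (fun s => ed s i) ((-(α₁ • ex t) - ν • ey t) i) t) :
    ∀ t : ℝ,
      HasDerivAt
        (fun s =>
          (1 / 2) * (Sum.elim (ex s) (ey s) ⬝ᵥ
            ((fromBlocks (α₁ • P) (ν • P) (ν • P)
              (α₂ • (1 : Matrix (Fin n) (Fin n) ℝ))) *ᵥ Sum.elim (ex s) (ey s)))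
          + (1 / 2) * (ed s ⬝ᵥ (P *ᵥ ed s)))
        (-(1 / 2) * (Sum.elim (ex t) (ey t) ⬝ᵥ
          ((fromBlocks ((α₁ / kd * kx) • (1 : Matrix (Fin n) (Fin n) ℝ))
              ((α₂ * kx) • Lᵀ) ((α₂ * kx) • L)
              ((2 : ℝ) • ((α₂ * kd) • (1 : Matrix (Fin n) (Fin n) ℝ)
                - (α₁ / kd) • P))) *ᵥ Sum.elim (ex t) (ey t)))) t := by
  intro t
  subst hα₁kd
  have hν1 : ν = 1 := by rw [hν, div_self (ne_of_gt hα₁)]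
  subst hν1
  set A := fromBlocks (α₁ • P) ((1:ℝ) • P) ((1:ℝ) • P)
      (α₂ • (1 : Matrix (Fin n) (Fin n) ℝ)) with hA
  set v' : (Fin n ⊕ Fin n) → ℝ :=
    Sum.elim (ey t + ed t) (-(kx • (L *ᵥ ex t)) - α₁ • ey t) with hv'
  have hv : ∀ i, HasDerivAt (fun s => Sum.elim (ex s) (ey s) i) (v' i) t := by
    rintro (i | i)
    · exact hex t i
    · exact hey t i
  have h1 := hasDerivAt_quadform A (fun s => Sum.elim (ex s) (ey s))
      (fun s => Sum.elim (ex s) (ey s)) v' v' t hv hv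
  have h2 := hasDerivAt_quadform P ed ed (-(α₁ • ex t) - (1:ℝ) • ey t)
      (-(α₁ • ex t) - (1:ℝ) • ey t) t (hed t) (hed t)
  have H := (h1.const_mul ((1:ℝ)/2)).add (h2.const_mul ((1:ℝ)/2))
  convert H using 1
  case e'_4 => rfl
  case e'_5 => rfl
  case e'_8 => rfl
  -- scalar identity
  have k1 : (L *ᵥ ex t) ⬝ᵥ (P *ᵥ ex t) + ex t ⬝ᵥ (P *ᵥ (L *ᵥ ex t))
      = ex t ⬝ᵥ ex t := by
    have h := congrArg (fun M : Matrix (Fin n) (Fin n) ℝ => ex t ⬝ᵥ (M *ᵥ ex t)) hPL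
    simp only [add_mulVec, dotProduct_add, ← mulVec_mulVec, one_mulVec] at h
    have e1 : ex t ⬝ᵥ (Lᵀ *ᵥ (P *ᵥ ex t)) = (L *ᵥ ex t) ⬝ᵥ (P *ᵥ ex t) := by
      rw [dotProduct_mulVec, vecMul_transpose]
    linear_combination h - e1
  have k2 : ex t ⬝ᵥ (Lᵀ *ᵥ ey t) = (L *ᵥ ex t) ⬝ᵥ ey t := by
    rw [dotProduct_mulVec, vecMul_transpose]
  have k3 : ey t ⬝ᵥ (L *ᵥ ex t) = (L *ᵥ ex t) ⬝ᵥ ey t := dotProduct_comm _ _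
  rw [div_self (ne_of_gt hα₁)]
  simp only [hA, hv', fromBlocks_mulVec, sumElim_dotProduct_sumElim,
    Sum.elim_comp_inl, Sum.elim_comp_inr,
    mulVec_add, mulVec_smul, mulVec_sub, add_mulVec, smul_mulVec,
    one_mulVec, one_smul, two_smul, sub_mulVec, mulVec_neg,
    dotProduct_add, add_dotProduct, dotProduct_sub, sub_dotProduct,
    dotProduct_smul, smul_dotProduct, dotProduct_neg, neg_dotProduct,
    smul_eq_mul]
  linear_combination (kx/2) * k1 - (α₂*kx/2) * k2 + (0:ℝ) * k3
end

section
/- Let A = [[0,1],[−α₁,0]] with α₁ > 0 and let f : ℝ≥0 → ℝ² satisfy ‖f(t)‖ ≤ K e^{−λt} with λ > 0. Then any solution z of ż = Az + f(t) converges (in sup-distance as t → ∞) to a solution of the unforced equation ż = Az; i.e., there exists a solution z₀ of ż₀ = Az₀ with ‖z(t) − z₀(t)‖ → 0 as t → ∞. -/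
open Matrix Real Filter MeasureTheory Set

/-- With `A = [[0,1],[−α₁,0]]`, `α₁ > 0`, and `f` continuous with
`‖f(t)‖ ≤ K e^{−λt}` for `t ≥ 0`, any solution `z` of `ż = Az + f` converges to
some solution `z₀` of the unforced equation `ż₀ = Az₀`: `‖z(t) − z₀(t)‖ → 0`. -/
theorem forced_oscillator_asymptotic_to_free (α₁ K lam : ℝ) (hα₁ : 0 < α₁)
    (hK : 0 ≤ K) (hlam : 0 < lam)
    (f z : ℝ → Fin 2 → ℝ) (hf : Continuous f)
    (hfb : ∀ t : ℝ, 0 ≤ t → ‖f t‖ ≤ K * Real.exp (-lam * t))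
    (hz : ∀ t i, HasDerivAt (fun s => z s i)
      (((!![0, 1; -α₁, 0]) *ᵥ z t + f t) i) t) :
    ∃ z₀ : ℝ → Fin 2 → ℝ,
      (∀ t i, HasDerivAt (fun s => z₀ s i) (((!![0, 1; -α₁, 0]) *ᵥ z₀ t) i) t) ∧
      Filter.Tendsto (fun t => ‖z t - z₀ t‖) Filter.atTop (nhds 0) := by
  set ω := Real.sqrt α₁ with hωdef
  have hω : 0 < ω := Real.sqrt_pos.2 hα₁
  have hω2 : ω * ω = α₁ := Real.mul_self_sqrt hα₁.le
  have hωne : ω ≠ 0 := ne_of_gt hω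
  have hz0 : ∀ t, HasDerivAt (fun s => z s 0) (z t 1 + f t 0) t := by
    intro t
    simpa [Matrix.mulVec, dotProduct, Fin.sum_univ_two] using hz t 0
  have hz1 : ∀ t, HasDerivAt (fun s => z s 1) (-α₁ * z t 0 + f t 1) t := by
    intro t
    simpa [Matrix.mulVec, dotProduct, Fin.sum_univ_two] using hz t 1
  have hlin : ∀ t : ℝ, HasDerivAt (fun s : ℝ => ω * s) ω t := by
    intro t; simpa using (hasDerivAt_id t).const_mul ω
  have hcs : ∀ t : ℝ, HasDerivAt (fun s : ℝ => Real.cos (ω * s)) (-Real.sin (ω * t) * ω) t :=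
    fun t => (hlin t).cos
  have hsn : ∀ t : ℝ, HasDerivAt (fun s : ℝ => Real.sin (ω * s)) (Real.cos (ω * t) * ω) t :=
    fun t => (hlin t).sin
  set u₁ : ℝ → ℝ := fun t => Real.cos (ω * t) * z t 0 - Real.sin (ω * t) * z t 1 / ω with hu₁
  set u₂ : ℝ → ℝ := fun t => ω * Real.sin (ω * t) * z t 0 + Real.cos (ω * t) * z t 1 with hu₂
  set g₁ : ℝ → ℝ := fun t => Real.cos (ω * t) * f t 0 - Real.sin (ω * t) * f t 1 / ω with hg₁
  set g₂ : ℝ → ℝ := fun t => ω * Real.sin (ω * t) * f t 0 + Real.cos (ω * t) * f t 1 with hg₂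
  have hu₁d : ∀ t, HasDerivAt u₁ (g₁ t) t := by
    intro t
    have h : HasDerivAt u₁
        ((-Real.sin (ω * t) * ω * z t 0 + Real.cos (ω * t) * (z t 1 + f t 0)) -
          (Real.cos (ω * t) * ω * z t 1 + Real.sin (ω * t) * (-α₁ * z t 0 + f t 1)) / ω) t :=
      (((hcs t).mul (hz0 t)).sub (((hsn t).mul (hz1 t)).div_const ω))
    convert h using 1
    rw [hg₁, ← hω2]; field_simp; ring
  have hu₂d : ∀ t, HasDerivAt u₂ (g₂ t) t := by
    intro t
    have h : HasDerivAt u₂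
        ((ω * (Real.cos (ω * t) * ω) * z t 0 + ω * Real.sin (ω * t) * (z t 1 + f t 0)) +
          (-Real.sin (ω * t) * ω * z t 1 + Real.cos (ω * t) * (-α₁ * z t 0 + f t 1))) t := by
      have h1 : HasDerivAt (fun s => ω * Real.sin (ω * s)) (ω * (Real.cos (ω * t) * ω)) t :=
        (hsn t).const_mul ω
      exact ((h1.mul (hz0 t)).add ((hcs t).mul (hz1 t)))
    convert h using 1
    rw [hg₂, ← hω2]; ring
  have hf0 : Continuous (fun t => f t 0) := (continuous_apply (0 : Fin 2)).comp hf
  have hf1 : Continuous (fun t => f t 1) := (continuous_apply (1 : Fin 2)).comp hf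
  have hcont1 : Continuous g₁ := by rw [hg₁]; fun_prop
  have hcont2 : Continuous g₂ := by rw [hg₂]; fun_prop
  set C : ℝ := (1 + 1/ω + ω) * K with hC
  have hexp : IntegrableOn (fun t => C * Real.exp (-lam * t)) (Ioi 0) :=
    (exp_neg_integrableOn_Ioi 0 hlam).const_mul _
  have hbound : ∀ t ∈ Ioi (0:ℝ), ‖g₁ t‖ ≤ C * Real.exp (-lam * t) ∧
      ‖g₂ t‖ ≤ C * Real.exp (-lam * t) := by
    intro t ht
    have h0 : |f t 0| ≤ K * Real.exp (-lam * t) :=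
      le_trans (norm_le_pi_norm (f t) 0) (hfb t ht.le)
    have h1 : |f t 1| ≤ K * Real.exp (-lam * t) :=
      le_trans (norm_le_pi_norm (f t) 1) (hfb t ht.le)
    have hc : |Real.cos (ω * t)| ≤ 1 := abs_cos_le_one _
    have hs : |Real.sin (ω * t)| ≤ 1 := abs_sin_le_one _
    have hKe : (0:ℝ) ≤ K * Real.exp (-lam * t) := mul_nonneg hK (Real.exp_pos _).le
    have e0 : |Real.cos (ω * t) * f t 0| ≤ K * Real.exp (-lam * t) := by
      rw [abs_mul]
      calc |Real.cos (ω * t)| * |f t 0| ≤ 1 * (K * Real.exp (-lam * t)) :=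
            mul_le_mul hc h0 (abs_nonneg _) zero_le_one
        _ = K * Real.exp (-lam * t) := one_mul _
    have e1 : |Real.sin (ω * t) * f t 1| ≤ K * Real.exp (-lam * t) := by
      rw [abs_mul]
      calc |Real.sin (ω * t)| * |f t 1| ≤ 1 * (K * Real.exp (-lam * t)) :=
            mul_le_mul hs h1 (abs_nonneg _) zero_le_one
        _ = K * Real.exp (-lam * t) := one_mul _
    have e2 : |Real.sin (ω * t) * f t 0| ≤ K * Real.exp (-lam * t) := by
      rw [abs_mul]
      calc |Real.sin (ω * t)| * |f t 0| ≤ 1 * (K * Real.exp (-lam * t)) :=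
            mul_le_mul hs h0 (abs_nonneg _) zero_le_one
        _ = K * Real.exp (-lam * t) := one_mul _
    have e3 : |Real.cos (ω * t) * f t 1| ≤ K * Real.exp (-lam * t) := by
      rw [abs_mul]
      calc |Real.cos (ω * t)| * |f t 1| ≤ 1 * (K * Real.exp (-lam * t)) :=
            mul_le_mul hc h1 (abs_nonneg _) zero_le_one
        _ = K * Real.exp (-lam * t) := one_mul _
    have expand : C * Real.exp (-lam * t)
        = K * Real.exp (-lam * t) + (1/ω) * (K * Real.exp (-lam * t))
          + ω * (K * Real.exp (-lam * t)) := by rw [hC]; ring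
    have h1ω : (0:ℝ) ≤ (1/ω) * (K * Real.exp (-lam * t)) := by positivity
    have hωK : (0:ℝ) ≤ ω * (K * Real.exp (-lam * t)) := by positivity
    constructor
    · rw [hg₁]
      calc |Real.cos (ω * t) * f t 0 - Real.sin (ω * t) * f t 1 / ω|
          ≤ |Real.cos (ω * t) * f t 0| + |Real.sin (ω * t) * f t 1 / ω| := abs_sub _ _
        _ = |Real.cos (ω * t) * f t 0| + |Real.sin (ω * t) * f t 1| / ω := by
            rw [abs_div, abs_of_pos hω]
        _ ≤ K * Real.exp (-lam * t) + (K * Real.exp (-lam * t)) / ω := by gcongr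
        _ ≤ C * Real.exp (-lam * t) := by
            rw [expand, div_eq_mul_inv, mul_comm (K * Real.exp (-lam * t)) ω⁻¹,
              ← one_div]
            linarith
    · rw [hg₂]
      calc |ω * Real.sin (ω * t) * f t 0 + Real.cos (ω * t) * f t 1|
          ≤ |ω * Real.sin (ω * t) * f t 0| + |Real.cos (ω * t) * f t 1| := abs_add_le _ _
        _ = ω * |Real.sin (ω * t) * f t 0| + |Real.cos (ω * t) * f t 1| := by
            rw [mul_assoc, abs_mul, abs_of_pos hω]
        _ ≤ ω * (K * Real.exp (-lam * t)) + K * Real.exp (-lam * t) := by gcongr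
        _ ≤ C * Real.exp (-lam * t) := by rw [expand]; linarith
  have hint1 : IntegrableOn g₁ (Ioi 0) := by
    refine hexp.mono' hcont1.aestronglyMeasurable.restrict ?_
    filter_upwards [ae_restrict_mem measurableSet_Ioi] with t ht
    exact (hbound t ht).1
  have hint2 : IntegrableOn g₂ (Ioi 0) := by
    refine hexp.mono' hcont2.aestronglyMeasurable.restrict ?_
    filter_upwards [ae_restrict_mem measurableSet_Ioi] with t ht
    exact (hbound t ht).2
  set L₁ : ℝ := u₁ 0 + ∫ s in Ioi (0:ℝ), g₁ s with hL₁
  set L₂ : ℝ := u₂ 0 + ∫ s in Ioi (0:ℝ), g₂ s with hL₂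
  have hu₁eq : ∀ t : ℝ, u₁ t = u₁ 0 + ∫ s in (0:ℝ)..t, g₁ s := by
    intro t
    rw [intervalIntegral.integral_eq_sub_of_hasDerivAt (fun x _ => hu₁d x)
      (hcont1.intervalIntegrable 0 t)]
    ring
  have hu₂eq : ∀ t : ℝ, u₂ t = u₂ 0 + ∫ s in (0:ℝ)..t, g₂ s := by
    intro t
    rw [intervalIntegral.integral_eq_sub_of_hasDerivAt (fun x _ => hu₂d x)
      (hcont2.intervalIntegrable 0 t)]
    ring
  have hu₁lim : Tendsto u₁ atTop (nhds L₁) := by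
    rw [hL₁]
    refine Tendsto.congr (fun t => (hu₁eq t).symm) ?_
    exact tendsto_const_nhds.add (intervalIntegral_tendsto_integral_Ioi 0 hint1 tendsto_id)
  have hu₂lim : Tendsto u₂ atTop (nhds L₂) := by
    rw [hL₂]
    refine Tendsto.congr (fun t => (hu₂eq t).symm) ?_
    exact tendsto_const_nhds.add (intervalIntegral_tendsto_integral_Ioi 0 hint2 tendsto_id)
  set z₀f : ℝ → Fin 2 → ℝ := fun t => ![Real.cos (ω * t) * L₁ + Real.sin (ω * t) * L₂ / ω,
      -(ω * Real.sin (ω * t)) * L₁ + Real.cos (ω * t) * L₂] with hz₀f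
  refine ⟨z₀f, ?_, ?_⟩
  · intro t i
    fin_cases i
    · have h : HasDerivAt (fun s => Real.cos (ω * s) * L₁ + Real.sin (ω * s) * L₂ / ω)
          ((-Real.sin (ω * t) * ω) * L₁ + (Real.cos (ω * t) * ω) * L₂ / ω) t :=
        ((hcs t).mul_const L₁).add (((hsn t).mul_const L₂).div_const ω)
      have hgoal : HasDerivAt (fun s => z₀f s 0) ((!![0, 1; -α₁, 0] *ᵥ z₀f t) 0) t := by
        simp only [hz₀f, Matrix.mulVec, dotProduct, Fin.sum_univ_two,
          Matrix.cons_val_zero, Matrix.cons_val_one, Matrix.head_cons, Matrix.of_apply]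
        convert h using 1
        field_simp; ring
      simpa using hgoal
    · have h : HasDerivAt (fun s => -(ω * Real.sin (ω * s)) * L₁ + Real.cos (ω * s) * L₂)
          (-(ω * (Real.cos (ω * t) * ω)) * L₁ + (-Real.sin (ω * t) * ω) * L₂) t := by
        have h1 : HasDerivAt (fun s : ℝ => -(ω * Real.sin (ω * s)))
            (-(ω * (Real.cos (ω * t) * ω))) t := ((hsn t).const_mul ω).neg
        exact (h1.mul_const L₁).add ((hcs t).mul_const L₂)
      have hgoal : HasDerivAt (fun s => z₀f s 1) ((!![0, 1; -α₁, 0] *ᵥ z₀f t) 1) t := by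
        simp only [hz₀f, Matrix.mulVec, dotProduct, Fin.sum_univ_two,
          Matrix.cons_val_zero, Matrix.cons_val_one, Matrix.head_cons, Matrix.of_apply]
        convert h using 1
        rw [← hω2]; field_simp; ring
      simpa using hgoal
  · have hd1 : Tendsto (fun t => u₁ t - L₁) atTop (nhds 0) := by
      simpa using hu₁lim.sub (tendsto_const_nhds (x := L₁))
    have hd2 : Tendsto (fun t => u₂ t - L₂) atTop (nhds 0) := by
      simpa using hu₂lim.sub (tendsto_const_nhds (x := L₂))
    have hterm1 : Tendsto (fun t => Real.cos (ω * t) * (u₁ t - L₁)) atTop (nhds 0) := by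
      refine squeeze_zero_norm (fun t => ?_) (by simpa using hd1.norm)
      rw [norm_mul]
      exact mul_le_of_le_one_left (norm_nonneg _) (abs_cos_le_one _)
    have hterm2 : Tendsto (fun t => Real.sin (ω * t) * (u₂ t - L₂) / ω) atTop (nhds 0) := by
      have h : Tendsto (fun t => ‖u₂ t - L₂‖ / ω) atTop (nhds 0) := by
        simpa using (hd2.norm).div_const ω
      refine squeeze_zero_norm (fun t => ?_) h
      rw [norm_div, norm_mul, Real.norm_eq_abs ω, abs_of_pos hω]
      exact div_le_div_of_nonneg_right
        (mul_le_of_le_one_left (norm_nonneg _) (abs_sin_le_one _)) hω.le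
    have hterm3 : Tendsto (fun t => -(ω * Real.sin (ω * t)) * (u₁ t - L₁)) atTop (nhds 0) := by
      have h : Tendsto (fun t => ω * ‖u₁ t - L₁‖) atTop (nhds 0) := by
        simpa using (hd1.norm).const_mul ω
      refine squeeze_zero_norm (fun t => ?_) h
      rw [norm_mul, norm_neg, norm_mul, Real.norm_eq_abs ω, abs_of_pos hω, mul_assoc]
      gcongr
      exact mul_le_of_le_one_left (norm_nonneg _) (abs_sin_le_one _)
    have hterm4 : Tendsto (fun t => Real.cos (ω * t) * (u₂ t - L₂)) atTop (nhds 0) := by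
      refine squeeze_zero_norm (fun t => ?_) (by simpa using hd2.norm)
      rw [norm_mul]
      exact mul_le_of_le_one_left (norm_nonneg _) (abs_cos_le_one _)
    have key0 : ∀ t : ℝ, z t 0 - z₀f t 0
        = Real.cos (ω * t) * (u₁ t - L₁) + Real.sin (ω * t) * (u₂ t - L₂) / ω := by
      intro t
      have py := Real.sin_sq_add_cos_sq (ω * t)
      simp only [hz₀f, hu₁, hu₂, Matrix.cons_val_zero]
      field_simp
      linear_combination (-(ω * z t 0)) * py
    have key1 : ∀ t : ℝ, z t 1 - z₀f t 1
        = -(ω * Real.sin (ω * t)) * (u₁ t - L₁) + Real.cos (ω * t) * (u₂ t - L₂) := by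
      intro t
      have py := Real.sin_sq_add_cos_sq (ω * t)
      simp only [hz₀f, hu₁, hu₂, Matrix.cons_val_one, Matrix.head_cons, Matrix.cons_val_zero]
      field_simp
      linear_combination (-(z t 1)) * py
    have hcomp0 : Tendsto (fun t => z t 0 - z₀f t 0) atTop (nhds 0) := by
      have := hterm1.add hterm2
      rw [add_zero] at this
      exact this.congr (fun t => (key0 t).symm)
    have hcomp1 : Tendsto (fun t => z t 1 - z₀f t 1) atTop (nhds 0) := by
      have := hterm3.add hterm4
      rw [add_zero] at this
      exact this.congr (fun t => (key1 t).symm)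
    have hpi : Tendsto (fun t => z t - z₀f t) atTop (nhds 0) := by
      rw [tendsto_pi_nhds]
      intro i
      fin_cases i
      · simpa using hcomp0
      · simpa using hcomp1
    simpa using hpi.norm
end
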